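/- Let f be computed by a skip-connections augmented deep Heaviside network with L hidden layers, width vector (d, p_1,…,p_L, 1), and skip connection vector (s_2,…,s_L) (meaning at most s_ℓ rows of the skip matrix into layer ℓ are non-zero). Then for any x₁, x₂ ∈ [0,1]^d, the function t ↦ f((1−t)x₁ + t x₂) on [0,1] is piecewise constant with at most (p₁+1)·∏_{ℓ=2}^L (s_ℓ+1) pieces. -/

import Mathlib

noncomputable def heaviside (t : ℝ) : ℝ := if 0 ≤ t then 1 else 0

/-- Hidden-layer functions of a skip-connections augmented deep Heaviside
network: `f⁽ℓ⁺¹⁾(x) = σ₀(W_ℓ f⁽ℓ⁾(x) + V_ℓ x − b_ℓ)`. -/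
noncomputable def skipDhnHidden (p : ℕ → ℕ)
    (W : ∀ ℓ : ℕ, Matrix (Fin (p (ℓ + 1))) (Fin (p ℓ)) ℝ)
    (V : ∀ ℓ : ℕ, Matrix (Fin (p (ℓ + 1))) (Fin (p 0)) ℝ)
    (b : ∀ ℓ : ℕ, Fin (p (ℓ + 1)) → ℝ) :
    (ℓ : ℕ) → (Fin (p 0) → ℝ) → Fin (p ℓ) → ℝ
  | 0, x => x
  | (ℓ + 1), x => fun j =>
      heaviside ((W ℓ).mulVec (skipDhnHidden p W V b ℓ x) j + (V ℓ).mulVec x j - b ℓ j)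

/-- `g : ℝ → ℝ` is piecewise constant on `[0,1]` with at most `m` pieces. -/
def PiecewiseConstOn (g : ℝ → ℝ) (m : ℕ) : Prop :=
  ∃ A : Fin m → Set ℝ,
    (∀ i, (A i).OrdConnected) ∧
    (Pairwise fun i j => Disjoint (A i) (A j)) ∧
    (⋃ i, A i) = Set.Icc (0 : ℝ) 1 ∧
    ∀ i, ∀ x ∈ A i, ∀ y ∈ A i, g x = g y

lemma heaviside_congr {a b : ℝ} (h : 0 ≤ a ↔ 0 ≤ b) : heaviside a = heaviside b := by
  simp only [heaviside]; exact if_congr h rfl rfl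

lemma mulVec_line {q d : ℕ} (M : Matrix (Fin q) (Fin d) ℝ) (x₁ x₂ : Fin d → ℝ) (t : ℝ)
    (j : Fin q) :
    M.mulVec ((1 - t) • x₁ + t • x₂) j
      = (M.mulVec x₂ j - M.mulVec x₁ j) * t + M.mulVec x₁ j := by
  simp [Matrix.mulVec_add, Matrix.mulVec_smul, Pi.add_apply, Pi.smul_apply, smul_eq_mul]
  ring

lemma step_lemma {n k : ℕ} (A : Set ℝ) (hA : A.OrdConnected)
    (J : Finset (Fin n)) (hJ : J.card ≤ k)
    (α β : Fin n → ℝ) (hα : ∀ j, j ∉ J → α j = 0)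
    (g : ℝ → Fin n → ℝ)
    (hg : ∀ t ∈ A, ∀ j, g t j = heaviside (α j * t + β j)) :
    ∃ B : Fin (k + 1) → Set ℝ,
      (∀ r, B r ⊆ A) ∧ (∀ r, (B r).OrdConnected) ∧
      (Pairwise fun r r' => Disjoint (B r) (B r')) ∧
      (⋃ r, B r) = A ∧
      ∀ r, ∀ t ∈ B r, ∀ t' ∈ B r, ∀ j, g t j = g t' j := by
  classical
  set Q : Fin n → ℝ → Prop :=
    fun j t => if 0 ≤ α j then 0 ≤ α j * t + β j else α j * t + β j < 0 with hQdef
  have hQmono : ∀ j, ∀ t t' : ℝ, t ≤ t' → Q j t → Q j t' := by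
    intro j t t' htt hq
    by_cases h : 0 ≤ α j
    · simp only [hQdef, if_pos h] at *
      nlinarith
    · simp only [hQdef, if_neg h] at *
      push_neg at h
      nlinarith
  set F : ℝ → ℕ := fun t => (J.filter (fun j => Q j t)).card with hFdef
  have hFsub : ∀ t t' : ℝ, t ≤ t' →
      J.filter (fun j => Q j t) ⊆ J.filter (fun j => Q j t') := by
    intro t t' h j hj
    simp only [Finset.mem_filter] at *
    exact ⟨hj.1, hQmono j t t' h hj.2⟩
  have hFmono : ∀ t t' : ℝ, t ≤ t' → F t ≤ F t' := fun t t' h =>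
    Finset.card_le_card (hFsub t t' h)
  have hFiff : ∀ t t' : ℝ, t ≤ t' → F t = F t' → ∀ j ∈ J, (Q j t ↔ Q j t') := by
    intro t t' h hF j hj
    have heq := Finset.eq_of_subset_of_card_le (hFsub t t' h) (le_of_eq hF.symm)
    constructor
    · exact hQmono j t t' h
    · intro hq
      have : j ∈ J.filter (fun j => Q j t') := Finset.mem_filter.2 ⟨hj, hq⟩
      rw [← heq] at this
      exact (Finset.mem_filter.1 this).2
  have haux : ∀ t ∈ A, ∀ t' ∈ A, t ≤ t' → F t = F t' → ∀ j, g t j = g t' j := by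
    intro t ht t' ht' h hF j
    by_cases hjJ : j ∈ J
    · rw [hg t ht j, hg t' ht' j]
      apply heaviside_congr
      have hQ := hFiff t t' h hF j hjJ
      by_cases hs : 0 ≤ α j
      · simpa only [hQdef, if_pos hs] using hQ
      · simp only [hQdef, if_neg hs] at hQ
        rw [← not_lt, ← not_lt]
        exact not_congr hQ
    · rw [hg t ht j, hg t' ht' j, hα j hjJ]
      simp
  refine ⟨fun r => {t | t ∈ A ∧ F t = (r : ℕ)}, fun r t ht => ht.1, ?_, ?_, ?_, ?_⟩
  · intro r
    constructor
    intro t ht t' ht' u hu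
    refine ⟨hA.out ht.1 ht'.1 hu, ?_⟩
    have h1 := hFmono t u hu.1
    have h2 := hFmono u t' hu.2
    have h3 := ht.2
    have h4 := ht'.2
    omega
  · intro r r' hrr
    rw [Set.disjoint_left]
    intro t ht ht'
    exact hrr (Fin.ext (ht.2.symm.trans ht'.2))
  · ext t
    simp only [Set.mem_iUnion, Set.mem_setOf_eq]
    constructor
    · rintro ⟨r, hr⟩; exact hr.1
    · intro ht
      have hFt : F t ≤ k := le_trans (Finset.card_le_card (Finset.filter_subset _ _)) hJ
      exact ⟨⟨F t, Nat.lt_succ_of_le hFt⟩, ht, rfl⟩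
  · intro r t ht t' ht' j
    rcases le_total t t' with h | h
    · exact haux t ht.1 t' ht'.1 h (ht.2.trans ht'.2.symm) j
    · exact (haux t' ht'.1 t ht.1 h (ht'.2.trans ht.2.symm) j).symm

open Classical in
/-- The restriction of a skip-DHN to a segment is piecewise constant with at
most `(p₁+1)·∏_{ℓ=2}^L (s_ℓ+1)` pieces. -/
theorem skip_dhn_restriction_piecewise_constant (L : ℕ) (hL : 1 ≤ L)
    (p : ℕ → ℕ) (hd : 1 ≤ p 0) (s : ℕ → ℕ)
    (W : ∀ ℓ : ℕ, Matrix (Fin (p (ℓ + 1))) (Fin (p ℓ)) ℝ)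
    (V : ∀ ℓ : ℕ, Matrix (Fin (p (ℓ + 1))) (Fin (p 0)) ℝ)
    (b : ∀ ℓ : ℕ, Fin (p (ℓ + 1)) → ℝ)
    (hV0 : V 0 = 0)
    (hV : ∀ ℓ : ℕ, 1 ≤ ℓ → ℓ + 1 ≤ L →
      (Finset.univ.filter fun j : Fin (p (ℓ + 1)) => V ℓ j ≠ 0).card ≤ s (ℓ + 1))
    (w : Fin (p L) → ℝ) (c : ℝ)
    (f : (Fin (p 0) → ℝ) → ℝ)
    (hf : ∀ x, f x = (∑ j, w j * skipDhnHidden p W V b L x j) - c)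
    (x₁ x₂ : Fin (p 0) → ℝ)
    (hx₁ : x₁ ∈ Set.Icc (0 : Fin (p 0) → ℝ) 1)
    (hx₂ : x₂ ∈ Set.Icc (0 : Fin (p 0) → ℝ) 1) :
    PiecewiseConstOn (fun t : ℝ => f ((1 - t) • x₁ + t • x₂))
      ((p 1 + 1) * ∏ ℓ ∈ Finset.Icc 2 L, (s ℓ + 1)) := by
  classical
  have key : ∀ ℓ, 1 ≤ ℓ → ℓ ≤ L →
      ∃ A : Fin ((p 1 + 1) * ∏ j ∈ Finset.Icc 2 ℓ, (s j + 1)) → Set ℝ,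
        (∀ i, (A i).OrdConnected) ∧
        (Pairwise fun i j => Disjoint (A i) (A j)) ∧
        (⋃ i, A i) = Set.Icc (0 : ℝ) 1 ∧
        ∀ i, ∀ t ∈ A i, ∀ t' ∈ A i,
          skipDhnHidden p W V b ℓ ((1 - t) • x₁ + t • x₂)
            = skipDhnHidden p W V b ℓ ((1 - t') • x₁ + t' • x₂) := by
    intro ℓ hℓ
    induction ℓ, hℓ using Nat.le_induction with
    | base =>
      intro _
      obtain ⟨B, hBsub, hBord, hBdis, hBun, hBc⟩ :=
        step_lemma (k := p 1) (Set.Icc (0 : ℝ) 1) Set.ordConnected_Icc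
          (Finset.univ : Finset (Fin (p 1))) (by simp)
          (fun j => (W 0).mulVec x₂ j - (W 0).mulVec x₁ j)
          (fun j => (W 0).mulVec x₁ j - b 0 j)
          (fun j hj => absurd (Finset.mem_univ j) hj)
          (fun t => skipDhnHidden p W V b 1 ((1 - t) • x₁ + t • x₂))
          (by
            intro t ht j
            simp only [skipDhnHidden, hV0, Matrix.zero_mulVec, Pi.zero_apply]
            rw [mulVec_line]
            ring_nf)
      have hcount : p 1 + 1 = (p 1 + 1) * ∏ j ∈ Finset.Icc 2 1, (s j + 1) := by
        simp
      refine ⟨fun i => B (finCongr hcount.symm i), fun i => hBord _, ?_, ?_, ?_⟩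
      · intro i j hij
        exact hBdis ((finCongr hcount.symm).injective.ne hij)
      · rw [(finCongr hcount.symm).surjective.iUnion_comp (fun r => B r)]
        exact hBun
      · intro i t ht t' ht'
        funext j
        exact hBc _ _ ht _ ht' j
    | succ ℓ hℓ ih =>
      intro hL'
      obtain ⟨A, hAord, hAdis, hAun, hAc⟩ := ih (Nat.le_of_succ_le hL')
      have hstep : ∀ i, ∃ B : Fin (s (ℓ + 1) + 1) → Set ℝ,
          (∀ r, B r ⊆ A i) ∧ (∀ r, (B r).OrdConnected) ∧
          (Pairwise fun r r' => Disjoint (B r) (B r')) ∧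
          (⋃ r, B r) = A i ∧
          ∀ r, ∀ t ∈ B r, ∀ t' ∈ B r, ∀ j,
            skipDhnHidden p W V b (ℓ + 1) ((1 - t) • x₁ + t • x₂) j
              = skipDhnHidden p W V b (ℓ + 1) ((1 - t') • x₁ + t' • x₂) j := by
        intro i
        have hαz : ∀ j, j ∉ (Finset.univ.filter fun j : Fin (p (ℓ + 1)) => V ℓ j ≠ 0) →
            (V ℓ).mulVec x₂ j - (V ℓ).mulVec x₁ j = 0 := by
          intro j hj
          simp only [Finset.mem_filter, Finset.mem_univ, true_and, not_not] at hj
          simp [Matrix.mulVec, hj]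
        by_cases hne : (A i).Nonempty
        · obtain ⟨t₀, ht₀⟩ := hne
          exact step_lemma (A i) (hAord i)
            (Finset.univ.filter fun j : Fin (p (ℓ + 1)) => V ℓ j ≠ 0)
            (hV ℓ hℓ hL')
            (fun j => (V ℓ).mulVec x₂ j - (V ℓ).mulVec x₁ j)
            (fun j => (W ℓ).mulVec (skipDhnHidden p W V b ℓ ((1 - t₀) • x₁ + t₀ • x₂)) j
              + (V ℓ).mulVec x₁ j - b ℓ j)
            hαz _
            (by
              intro t ht j
              simp only [skipDhnHidden]
              rw [hAc i t ht t₀ ht₀, mulVec_line]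
              ring_nf)
        · exact step_lemma (A i) (hAord i)
            (Finset.univ.filter fun j : Fin (p (ℓ + 1)) => V ℓ j ≠ 0)
            (hV ℓ hℓ hL')
            (fun j => (V ℓ).mulVec x₂ j - (V ℓ).mulVec x₁ j) 0 hαz _
            (fun t ht => absurd ⟨t, ht⟩ hne)
      choose B hBsub hBord hBdis hBun hBc using hstep
      have hcount : (p 1 + 1) * ∏ j ∈ Finset.Icc 2 (ℓ + 1), (s j + 1)
          = ((p 1 + 1) * ∏ j ∈ Finset.Icc 2 ℓ, (s j + 1)) * (s (ℓ + 1) + 1) := by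
        rw [Finset.prod_Icc_succ_top (by omega : 2 ≤ ℓ + 1), mul_assoc]
      set e : Fin ((p 1 + 1) * ∏ j ∈ Finset.Icc 2 (ℓ + 1), (s j + 1))
          ≃ Fin ((p 1 + 1) * ∏ j ∈ Finset.Icc 2 ℓ, (s j + 1)) × Fin (s (ℓ + 1) + 1) :=
        (finCongr hcount).trans finProdFinEquiv.symm with hedef
      refine ⟨fun q => B (e q).1 (e q).2, fun q => hBord _ _, ?_, ?_, ?_⟩
      · intro q q' hqq
        have he : e q ≠ e q' := fun h => hqq (e.injective h)
        by_cases h1 : (e q).1 = (e q').1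
        · have h2 : (e q).2 ≠ (e q').2 := fun h2 => he (Prod.ext h1 h2)
          show Disjoint (B (e q).1 (e q).2) (B (e q').1 (e q').2)
          rw [← h1]
          exact hBdis (e q).1 h2
        · exact ((hAdis h1).mono (hBsub _ _) (hBsub _ _))
      · ext t
        simp only [Set.mem_iUnion]
        constructor
        · rintro ⟨q, hq⟩
          have ht : t ∈ A (e q).1 := hBsub _ _ hq
          rw [← hAun]
          exact Set.mem_iUnion.2 ⟨_, ht⟩
        · intro ht
          rw [← hAun] at ht
          obtain ⟨i, hi⟩ := Set.mem_iUnion.1 ht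
          rw [← hBun i] at hi
          obtain ⟨r, hr⟩ := Set.mem_iUnion.1 hi
          refine ⟨e.symm (i, r), ?_⟩
          show t ∈ B (e (e.symm (i, r))).1 (e (e.symm (i, r))).2
          rw [Equiv.apply_symm_apply]
          exact hr
      · intro q t ht t' ht'
        funext j
        exact hBc _ _ _ ht _ ht' j
  obtain ⟨A, h1, h2, h3, h4⟩ := key L hL le_rfl
  refine ⟨A, h1, h2, h3, ?_⟩
  intro i t ht t' ht'
  show f ((1 - t) • x₁ + t • x₂) = f ((1 - t') • x₁ + t' • x₂)
  rw [hf, hf, h4 i t ht t' ht']
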